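/- Let d₁, d₂, d₃ ≥ 0 and let m = diag(d₁+d₂+d₃, d₁−d₂−d₃, −d₁+d₂−d₃, −d₁−d₂+d₃) be the type-I canonical depolarizing differential Mueller matrix. Then for every t ≥ 0 and every admissible Stokes vector s ∈ ℝ⁴, the matrix M = exp(t·m) satisfies (M s)ᵀ G (M s) ≥ sᵀ G s. -/

import Mathlib

open Matrix

/-- The Minkowski metric matrix G = diag(1, -1, -1, -1). -/
noncomputable def G : Matrix (Fin 4) (Fin 4) ℝ := Matrix.diagonal ![1, -1, -1, -1]

/-- A Stokes vector is admissible if s₀ ≥ 0 and sᵀGs ≥ 0. -/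
def StokesAdmissible (s : Fin 4 → ℝ) : Prop := 0 ≤ s 0 ∧ 0 ≤ s ⬝ᵥ G.mulVec s

/-- For the type-I canonical depolarizing differential Mueller matrix with nonnegative
canonical parameters, the exponential exp(t·m) cannot decrease the Minkowski metric of
any admissible Stokes vector. -/
theorem minkowski_nondecreasing_exp_typeI
    (d₁ d₂ d₃ : ℝ) (h₁ : 0 ≤ d₁) (h₂ : 0 ≤ d₂) (h₃ : 0 ≤ d₃)
    (m : Matrix (Fin 4) (Fin 4) ℝ)
    (hm : m = Matrix.diagonal ![d₁ + d₂ + d₃, d₁ - d₂ - d₃, -d₁ + d₂ - d₃, -d₁ - d₂ + d₃])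
    (t : ℝ) (ht : 0 ≤ t) (s : Fin 4 → ℝ) (hs : StokesAdmissible s) :
    s ⬝ᵥ G.mulVec s ≤
      ((NormedSpace.exp (t • m)).mulVec s) ⬝ᵥ G.mulVec ((NormedSpace.exp (t • m)).mulVec s) := by
  obtain ⟨hs0, hsq⟩ := hs
  set w : Fin 4 → ℝ := ![d₁ + d₂ + d₃, d₁ - d₂ - d₃, -d₁ + d₂ - d₃, -d₁ - d₂ + d₃] with hw
  have hexp : NormedSpace.exp (t • m) = Matrix.diagonal (fun i => Real.exp (t * w i)) := by
    rw [hm, ← Matrix.diagonal_smul, Matrix.exp_diagonal, Pi.exp_def]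
    funext i
    simp [Real.exp_eq_exp_ℝ]
  have hG : ∀ v : Fin 4 → ℝ, v ⬝ᵥ G.mulVec v = v 0 ^ 2 - v 1 ^ 2 - v 2 ^ 2 - v 3 ^ 2 := by
    intro v
    simp [G, dotProduct, Matrix.mulVec_diagonal, Fin.sum_univ_four]
    ring
  rw [hexp]
  have hmv : ∀ i, (Matrix.diagonal (fun i => Real.exp (t * w i))).mulVec s i
      = Real.exp (t * w i) * s i := fun i => Matrix.mulVec_diagonal _ _ _
  rw [hG, hG, hmv 0, hmv 1, hmv 2, hmv 3]
  rw [hG] at hsq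
  set a := Real.exp (t * w 0)
  have ha1 : 1 ≤ a := Real.one_le_exp (by have : (0:ℝ) ≤ w 0 := by simp [hw]; linarith
                                          positivity)
  have hb : Real.exp (t * w 1) ≤ a := Real.exp_le_exp.2 (by
    have : w 1 ≤ w 0 := by simp [hw]; linarith
    nlinarith)
  have hc : Real.exp (t * w 2) ≤ a := Real.exp_le_exp.2 (by
    have : w 2 ≤ w 0 := by simp [hw]; linarith
    nlinarith)
  have hd : Real.exp (t * w 3) ≤ a := Real.exp_le_exp.2 (by
    have : w 3 ≤ w 0 := by simp [hw]; linarith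
    nlinarith)
  have hbp := Real.exp_pos (t * w 1)
  have hcp := Real.exp_pos (t * w 2)
  have hdp := Real.exp_pos (t * w 3)
  have ha2 : 1 ≤ a ^ 2 := by nlinarith
  have hb2 : Real.exp (t * w 1) ^ 2 ≤ a ^ 2 := by nlinarith
  have hc2 : Real.exp (t * w 2) ^ 2 ≤ a ^ 2 := by nlinarith
  have hd2 : Real.exp (t * w 3) ^ 2 ≤ a ^ 2 := by nlinarith
  nlinarith [mul_le_mul_of_nonneg_right hb2 (sq_nonneg (s 1)),
    mul_le_mul_of_nonneg_right hc2 (sq_nonneg (s 2)),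
    mul_le_mul_of_nonneg_right hd2 (sq_nonneg (s 3)),
    le_mul_of_one_le_left hsq ha2]
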